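/- For every M > 0 and every s ∈ (0,1] there exists a constant c > 0, depending only on M and s, such that for every l ∈ ℕ, every measurable V : ℝ → ℝ, every E ∈ ℝ with |V(x) − E| ≤ M for almost every x ∈ Λ_l := [−l/2, l/2], and every twice continuously differentiable ψ : ℝ → ℂ satisfying −ψ'' + Vψ = Eψ on Λ_l, one has ∫_S |ψ(x)|² dx ≥ c ∫_{Λ_l} |ψ(x)|² dx, where S := ⋃_{k ∈ ℤ ∩ Λ_l} [k − s/2, k + s/2]. -/

import Mathlib

open MeasureTheory Set Real
open scoped ENNReal NNReal

section Gron
variable {E : Type*} [NormedAddCommGroup E] [NormedSpace ℝ E]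

lemma gron_fwd {u : ℝ → E} (hu : Differentiable ℝ u) {K a b : ℝ}
    (hb : ∀ t ∈ Set.Icc a b, ‖deriv u t‖ ≤ K * ‖u t‖) :
    ∀ x ∈ Set.Icc a b, ‖u x‖ ≤ Real.exp (K * (x - a)) * ‖u a‖ := by
  intro x hx
  have := norm_le_gronwallBound_of_norm_deriv_right_le (f := u) (f' := deriv u)
    (δ := ‖u a‖) (K := K) (ε := 0) (a := a) (b := b)
    (hu.continuous.continuousOn)
    (fun t _ => (hu t).hasDerivAt.hasDerivWithinAt)
    le_rfl
    (fun t ht => by simpa using hb t (Set.Ico_subset_Icc_self ht)) x hx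
  simpa [gronwallBound_ε0, mul_comm] using this

lemma gron_bwd {u : ℝ → E} (hu : Differentiable ℝ u) {K a b : ℝ}
    (hb : ∀ t ∈ Set.Icc a b, ‖deriv u t‖ ≤ K * ‖u t‖) :
    ∀ x ∈ Set.Icc a b, ‖u x‖ ≤ Real.exp (K * (b - x)) * ‖u b‖ := by
  intro x hx
  set v : ℝ → E := fun t => u (a + b - t) with hv
  have hvd : ∀ t : ℝ, HasDerivAt v ((-1 : ℝ) • deriv u (a + b - t)) t := by
    intro t
    exact (hu (a + b - t)).hasDerivAt.scomp t
      (((hasDerivAt_const t (a + b)).sub (hasDerivAt_id t)).congr_deriv (by ring))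
  have hvdiff : Differentiable ℝ v := fun t => (hvd t).differentiableAt
  have hderiv : ∀ t, deriv v t = (-1 : ℝ) • deriv u (a + b - t) := fun t => (hvd t).deriv
  have hb' : ∀ t ∈ Set.Icc a b, ‖deriv v t‖ ≤ K * ‖v t‖ := by
    intro t ht
    have h1 : a + b - t ∈ Set.Icc a b := by
      constructor
      · linarith [ht.2]
      · linarith [ht.1]
    rw [hderiv]
    simpa using hb _ h1
  have := gron_fwd hvdiff hb' (a + b - x)
    (by constructor; · linarith [hx.2]
        · linarith [hx.1])
  simpa [hv, show a + b - (a + b - x) = x by ring, show a + b - x - a = b - x by ring] using this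

lemma gron_two {u : ℝ → E} (hu : Differentiable ℝ u) {K a b : ℝ}
    (hb : ∀ t ∈ Set.Icc a b, ‖deriv u t‖ ≤ K * ‖u t‖)
    {x₀ x : ℝ} (h₀ : x₀ ∈ Set.Icc a b) (hx : x ∈ Set.Icc a b) :
    ‖u x‖ ≤ Real.exp (K * |x - x₀|) * ‖u x₀‖ := by
  rcases le_total x₀ x with h | h
  · have := gron_fwd hu (fun t ht => hb t ⟨le_trans h₀.1 ht.1, le_trans ht.2 hx.2⟩)
      x ⟨h, le_refl x⟩
    rwa [abs_of_nonneg (by linarith)]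
  · have := gron_bwd hu (fun t ht => hb t ⟨le_trans hx.1 ht.1, le_trans ht.2 h₀.2⟩)
      x ⟨le_refl x, h⟩
    rwa [abs_of_nonpos (by linarith), neg_sub]

end Gron

lemma deriv_bound {ψ : ℝ → ℂ} (hψ : ContDiff ℝ 2 ψ) {a b M P : ℝ} (hab : a < b)
    (hP : ∀ t ∈ Set.Icc a b, ‖ψ t‖ ≤ P)
    (hM2 : ∀ t ∈ Set.Icc a b, ‖deriv (deriv ψ) t‖ ≤ M * P) :
    ∀ x ∈ Set.Icc a b, ‖deriv ψ x‖ ≤ 2 * P / (b - a) + (b - a) * (M * P) := by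
  intro x hx
  have hd1 : Differentiable ℝ ψ := hψ.differentiable (by norm_num)
  have hd2 : Differentiable ℝ (deriv ψ) :=
    (hψ.iterate_deriv' 1 1).differentiable (by norm_num)
  have hlip : ∀ t ∈ Set.Icc a b, ‖deriv ψ x - deriv ψ t‖ ≤ M * P * (b - a) := by
    intro t ht
    have := (convex_Icc a b).norm_image_sub_le_of_norm_deriv_le
      (f := deriv ψ) (fun y _ => hd2 y) hM2 ht hx
    calc ‖deriv ψ x - deriv ψ t‖ ≤ M * P * ‖x - t‖ := this
      _ ≤ M * P * (b - a) := by
          have h0 : (0:ℝ) ≤ M * P :=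
            le_trans (norm_nonneg _) (hM2 t ht)
          have hxt : ‖x - t‖ ≤ b - a := by
            rw [Real.norm_eq_abs, abs_sub_le_iff]
            constructor
            · linarith [hx.2, ht.1]
            · linarith [ht.2, hx.1]
          exact mul_le_mul_of_nonneg_left hxt h0
  have key : ∫ t in a..b, (deriv ψ x - deriv ψ t) = (b - a) • deriv ψ x - (ψ b - ψ a) := by
    rw [intervalIntegral.integral_sub intervalIntegrable_const
      ((hd2.continuous.intervalIntegrable a b)),
      intervalIntegral.integral_const,
      intervalIntegral.integral_deriv_eq_sub (fun y _ => hd1 y)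
        (hd2.continuous.intervalIntegrable a b)]
  have hnormint : ‖∫ t in a..b, (deriv ψ x - deriv ψ t)‖ ≤ M * P * (b - a) * |b - a| := by
    apply intervalIntegral.norm_integral_le_of_norm_le_const
    intro t ht
    have ht' : t ∈ Set.Icc a b :=
      Set.Ioc_subset_Icc_self (by rwa [Set.uIoc_of_le hab.le] at ht)
    exact hlip t ht'
  have hP0 : (0:ℝ) ≤ P := le_trans (norm_nonneg _) (hP x hx)
  have hba : (0:ℝ) < b - a := by linarith
  have h1 : (b - a) * ‖deriv ψ x‖ ≤ 2 * P + M * P * (b - a) * (b - a) := by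
    have h2 : ‖(b - a) • deriv ψ x‖ = (b - a) * ‖deriv ψ x‖ := by
      rw [norm_smul, Real.norm_eq_abs, abs_of_pos hba]
    calc (b - a) * ‖deriv ψ x‖
        = ‖(∫ t in a..b, (deriv ψ x - deriv ψ t)) + (ψ b - ψ a)‖ := by
          rw [← h2, key]; ring_nf
      _ ≤ ‖∫ t in a..b, (deriv ψ x - deriv ψ t)‖ + ‖ψ b - ψ a‖ := norm_add_le _ _
      _ ≤ M * P * (b - a) * |b - a| + (‖ψ b‖ + ‖ψ a‖) :=
          add_le_add hnormint (norm_sub_le _ _)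
      _ ≤ M * P * (b - a) * (b - a) + 2 * P := by
          rw [abs_of_nonneg (by linarith : (0:ℝ) ≤ b - a)]
          have hb1 := hP b ⟨hab.le, le_refl b⟩
          have ha1 := hP a ⟨le_refl a, hab.le⟩
          linarith
      _ = 2 * P + M * P * (b - a) * (b - a) := by ring
  have h3 : ‖deriv ψ x‖ ≤ (2 * P + M * P * (b - a) * (b - a)) / (b - a) := by
    rw [le_div_iff₀ hba]; linarith
  calc ‖deriv ψ x‖ ≤ (2 * P + M * P * (b - a) * (b - a)) / (b - a) := h3
    _ = 2 * P / (b - a) + (b - a) * (M * P) := by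
        rw [add_div, mul_div_assoc (M * P * (b - a)) (b - a) (b - a),
          div_self hba.ne', mul_one]
        ring

lemma mass_lower {ψ : ℝ → ℂ} (hc : Continuous ψ) {a b P L δ x₀ : ℝ}
    (hx₀ : x₀ ∈ Set.Icc a b) (hP : ‖ψ x₀‖ = P)
    (hL : ∀ x ∈ Set.Icc a b, ‖ψ x - ψ x₀‖ ≤ L * |x - x₀|)
    (hδ : 0 < δ) (hδ2 : δ ≤ (b - a) / 2) (hδL : δ * L ≤ P / 2) :
    δ * (P / 2) ^ 2 ≤ ∫ x in Set.Icc a b, ‖ψ x‖ ^ 2 := by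
  have hP0 : (0:ℝ) ≤ P := hP ▸ norm_nonneg _
  obtain ⟨c, d, hcd, hsub, hx₀cd⟩ :
      ∃ c d : ℝ, d = c + δ ∧ Set.Icc c d ⊆ Set.Icc a b ∧ ∀ x ∈ Set.Icc c d, |x - x₀| ≤ δ := by
    rcases le_total x₀ ((a+b)/2) with h | h
    · exact ⟨x₀, x₀ + δ, rfl, fun x hx => ⟨le_trans hx₀.1 hx.1, by
        have := hx.2; have := hx₀.1; simp only [Set.mem_Icc] at *; linarith⟩,
        fun x hx => by rw [abs_of_nonneg (by linarith [hx.1])]; linarith [hx.2]⟩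
    · exact ⟨x₀ - δ, x₀, by ring, fun x hx => ⟨by
        have := hx.1; have := hx₀.2; simp only [Set.mem_Icc] at *; linarith, le_trans hx.2 hx₀.2⟩,
        fun x hx => by rw [abs_of_nonpos (by linarith [hx.2])]; linarith [hx.1]⟩
  have hlow : ∀ x ∈ Set.Icc c d, (P / 2) ^ 2 ≤ ‖ψ x‖ ^ 2 := by
    intro x hx
    have h1 : ‖ψ x - ψ x₀‖ ≤ P / 2 := by
      rcases le_or_gt L 0 with h | h
      · have h5 := hL x (hsub hx)
        nlinarith [abs_nonneg (x - x₀), norm_nonneg (ψ x - ψ x₀)]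
      · calc ‖ψ x - ψ x₀‖ ≤ L * |x - x₀| := hL x (hsub hx)
          _ ≤ L * δ := mul_le_mul_of_nonneg_left (hx₀cd x hx) h.le
          _ = δ * L := mul_comm _ _
          _ ≤ P / 2 := hδL
    have h2 : P / 2 ≤ ‖ψ x‖ := by
      have h6 := norm_sub_norm_le (ψ x₀) (ψ x)
      rw [hP] at h6
      rw [norm_sub_rev] at h1
      linarith
    exact pow_le_pow_left₀ (by positivity) h2 2
  have hint : IntegrableOn (fun x => ‖ψ x‖ ^ 2) (Set.Icc a b) := by
    exact (hc.norm.pow 2).integrableOn_Icc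
  calc δ * (P / 2) ^ 2 = (P / 2) ^ 2 * (volume (Set.Icc c d)).toReal := by
        rw [Real.volume_Icc, hcd]
        rw [show c + δ - c = δ by ring, ENNReal.toReal_ofReal hδ.le]; ring
    _ ≤ ∫ x in Set.Icc c d, ‖ψ x‖ ^ 2 :=
        setIntegral_ge_of_const_le_real measurableSet_Icc (by simp [Real.volume_Icc]) hlow
          (hint.mono_set hsub)
    _ ≤ ∫ x in Set.Icc a b, ‖ψ x‖ ^ 2 := by
        apply setIntegral_mono_set hint
        · filter_upwards with x using by positivity
        · exact HasSubset.Subset.eventuallyLE hsub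

noncomputable def C1 (M s : ℝ) : ℝ := 4 / s + M
noncomputable def dlt (M s : ℝ) : ℝ := min (s/4) (1/(2*(C1 M s)))
noncomputable def CC (M s : ℝ) : ℝ := Real.exp (2*(M+1)) * (1 + C1 M s)^2 * 4 / dlt M s

lemma C1_pos {M s : ℝ} (hM : 0 < M) (hs0 : 0 < s) : 0 < C1 M s := by
  unfold C1; positivity

lemma dlt_pos {M s : ℝ} (hM : 0 < M) (hs0 : 0 < s) : 0 < dlt M s := by
  have := C1_pos hM hs0
  unfold dlt
  apply lt_min (by positivity) (by positivity)

lemma CC_pos {M s : ℝ} (hM : 0 < M) (hs0 : 0 < s) : 0 < CC M s := by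
  have h1 := C1_pos hM hs0
  have h2 := dlt_pos hM hs0
  unfold CC; positivity

set_option maxHeartbeats 1000000 in
lemma local_est (M s : ℝ) (hM : 0 < M) (hs0 : 0 < s) (hs1 : s ≤ 1)
    (l : ℕ) (hl : 1 ≤ l) (ψ : ℝ → ℂ) (hψ : ContDiff ℝ 2 ψ)
    (hODE : ∀ x ∈ Set.Icc (-(l:ℝ)/2) ((l:ℝ)/2), ‖deriv (deriv ψ) x‖ ≤ M * ‖ψ x‖)
    (k : ℤ) (hk : (k:ℝ) ∈ Set.Icc (-(l:ℝ)/2) ((l:ℝ)/2)) :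
    ∫ x in Set.Icc ((k:ℝ)-1/2) ((k:ℝ)+1/2) ∩ Set.Icc (-(l:ℝ)/2) ((l:ℝ)/2), ‖ψ x‖^2
      ≤ CC M s * ∫ x in Set.Icc ((k:ℝ)-s/2) ((k:ℝ)+s/2), ‖ψ x‖^2 := by
  have hl1 : (1:ℝ) ≤ l := by exact_mod_cast hl
  obtain ⟨hk1, hk2⟩ := hk
  have hd1 : Differentiable ℝ ψ := hψ.differentiable (by norm_num)
  have hd2 : Differentiable ℝ (deriv ψ) :=
    (hψ.iterate_deriv' 1 1).differentiable (by norm_num)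
  -- choose subinterval [a, a+s/2] inside Λ_s(k) ∩ Λ_l
  obtain ⟨a, hsub1, hsub2⟩ :
      ∃ a : ℝ, Set.Icc a (a + s/2) ⊆ Set.Icc ((k:ℝ)-s/2) ((k:ℝ)+s/2) ∧
        Set.Icc a (a + s/2) ⊆ Set.Icc (-(l:ℝ)/2) ((l:ℝ)/2) := by
    by_cases hcase : (k:ℝ) + s/2 ≤ (l:ℝ)/2
    · exact ⟨(k:ℝ), Set.Icc_subset_Icc (by linarith) (by linarith),
        Set.Icc_subset_Icc (by linarith) (by linarith)⟩
    · push_neg at hcase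
      exact ⟨(k:ℝ) - s/2, Set.Icc_subset_Icc (by linarith) (by linarith),
        Set.Icc_subset_Icc (by linarith) (by linarith)⟩
  set a' := a + s/2 with ha'
  have hab : a < a' := by simp [ha']; linarith
  -- maximum point
  obtain ⟨x₀, hx₀mem, hx₀max⟩ :=
    isCompact_Icc.exists_isMaxOn (Set.nonempty_Icc.mpr hab.le)
      (hψ.continuous.norm.continuousOn)
  set P := ‖ψ x₀‖ with hPdef
  have hP : ∀ t ∈ Set.Icc a a', ‖ψ t‖ ≤ P := fun t ht => hx₀max ht
  have hP0 : (0:ℝ) ≤ P := norm_nonneg _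
  have hM2 : ∀ t ∈ Set.Icc a a', ‖deriv (deriv ψ) t‖ ≤ M * P := fun t ht =>
    le_trans (hODE t (hsub2 ht)) (mul_le_mul_of_nonneg_left (hP t ht) hM.le)
  have hD := deriv_bound hψ hab hP hM2
  have hba : a' - a = s/2 := by simp [ha']
  have hC1P : ∀ x ∈ Set.Icc a a', ‖deriv ψ x‖ ≤ C1 M s * P := by
    intro x hx
    have h := hD x hx
    rw [hba] at h
    have e1 : 2 * P / (s/2) = 4/s * P := by field_simp; ring
    rw [e1] at h
    have e2 : s/2 * (M * P) ≤ M * P := by nlinarith [mul_nonneg hM.le hP0]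
    calc ‖deriv ψ x‖ ≤ 4/s * P + s/2 * (M * P) := h
      _ ≤ 4/s * P + M * P := by linarith
      _ = C1 M s * P := by unfold C1; ring
  have hLip : ∀ x ∈ Set.Icc a a', ‖ψ x - ψ x₀‖ ≤ (C1 M s * P) * |x - x₀| := by
    intro x hx
    have := (convex_Icc a a').norm_image_sub_le_of_norm_deriv_le
      (f := ψ) (fun y _ => hd1 y) hC1P hx₀mem hx
    simpa [Real.norm_eq_abs] using this
  have hC1pos := C1_pos hM hs0
  have hdpos := dlt_pos hM hs0
  have hδ2 : dlt M s ≤ (a' - a) / 2 := by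
    rw [hba]
    calc dlt M s ≤ s/4 := min_le_left _ _
      _ = (s/2)/2 := by ring
  have hδL : dlt M s * (C1 M s * P) ≤ P / 2 := by
    have h1 : dlt M s ≤ 1/(2 * C1 M s) := min_le_right _ _
    have h2 : dlt M s * C1 M s ≤ 1/2 := by
      have h3 := mul_le_mul_of_nonneg_right h1 hC1pos.le
      have h4 : 1/(2 * C1 M s) * C1 M s = 1/2 := by
        field_simp
      linarith
    nlinarith [hdpos.le]
  have hlow := mass_lower hψ.continuous hx₀mem rfl hLip hdpos hδ2 hδL
  have hintS : IntegrableOn (fun x => ‖ψ x‖^2) (Set.Icc ((k:ℝ)-s/2) ((k:ℝ)+s/2)) :=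
    (hψ.continuous.norm.pow 2).integrableOn_Icc
  have hlow2 : dlt M s * (P/2)^2 ≤ ∫ x in Set.Icc ((k:ℝ)-s/2) ((k:ℝ)+s/2), ‖ψ x‖^2 := by
    refine le_trans hlow (setIntegral_mono_set hintS ?_ ?_)
    · filter_upwards with x using by positivity
    · exact HasSubset.Subset.eventuallyLE hsub1
  -- Gronwall
  have hbnd : ∀ t ∈ Set.Icc (-(l:ℝ)/2) ((l:ℝ)/2),
      ‖deriv (fun t => (ψ t, deriv ψ t)) t‖ ≤ (M+1) * ‖(fun t => (ψ t, deriv ψ t)) t‖ := by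
    intro t ht
    have hud : HasDerivAt (fun t => (ψ t, deriv ψ t)) (deriv ψ t, deriv (deriv ψ) t) t :=
      (hd1 t).hasDerivAt.prodMk (hd2 t).hasDerivAt
    rw [hud.deriv]
    show ‖((deriv ψ t : ℂ), (deriv (deriv ψ) t : ℂ))‖ ≤ (M+1) * ‖((ψ t : ℂ), (deriv ψ t : ℂ))‖
    have h2 : ‖ψ t‖ ≤ ‖((ψ t : ℂ), (deriv ψ t : ℂ))‖ :=
      norm_fst_le ((ψ t, deriv ψ t) : ℂ × ℂ)
    have h1 : ‖deriv ψ t‖ ≤ ‖((ψ t : ℂ), (deriv ψ t : ℂ))‖ :=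
      norm_snd_le ((ψ t, deriv ψ t) : ℂ × ℂ)
    have h0 : (0:ℝ) ≤ ‖((ψ t : ℂ), (deriv ψ t : ℂ))‖ := norm_nonneg _
    have hODEt := hODE t ht
    have hψt : (0:ℝ) ≤ ‖ψ t‖ := norm_nonneg _
    rw [norm_prod_le_iff]
    constructor
    · show ‖deriv ψ t‖ ≤ _
      nlinarith
    · show ‖deriv (deriv ψ) t‖ ≤ _
      nlinarith
  have hu : Differentiable ℝ (fun t => (ψ t, deriv ψ t)) := fun t =>
    ((hd1 t).hasDerivAt.prodMk (hd2 t).hasDerivAt).differentiableAt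
  have hx₀Λ : x₀ ∈ Set.Icc (-(l:ℝ)/2) ((l:ℝ)/2) := hsub2 hx₀mem
  have hux₀ : ‖((ψ x₀ : ℂ), (deriv ψ x₀ : ℂ))‖ ≤ (1 + C1 M s) * P := by
    rw [norm_prod_le_iff]
    have hd := hC1P x₀ hx₀mem
    constructor
    · show ‖ψ x₀‖ ≤ _
      nlinarith
    · show ‖deriv ψ x₀‖ ≤ _
      nlinarith
  have hkx₀ : |x₀ - (k:ℝ)| ≤ 1/2 := by
    have h1 := hsub1 hx₀mem
    rw [abs_sub_le_iff]
    constructor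
    · linarith [h1.2]
    · linarith [h1.1]
  have hptwise : ∀ x ∈ Set.Icc ((k:ℝ)-1/2) ((k:ℝ)+1/2) ∩ Set.Icc (-(l:ℝ)/2) ((l:ℝ)/2),
      ‖ψ x‖^2 ≤ Real.exp (2*(M+1)) * (1 + C1 M s)^2 * P^2 := by
    intro x hx
    have hxx₀ : |x - x₀| ≤ 1 := by
      rw [abs_sub_le_iff]
      constructor
      · rw [abs_sub_le_iff] at hkx₀
        linarith [hx.1.2, hkx₀.2]
      · rw [abs_sub_le_iff] at hkx₀
        linarith [hx.1.1, hkx₀.1]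
    have hg : ‖((ψ x : ℂ), (deriv ψ x : ℂ))‖ ≤
        Real.exp ((M+1) * |x - x₀|) * ‖((ψ x₀ : ℂ), (deriv ψ x₀ : ℂ))‖ :=
      gron_two hu hbnd hx₀Λ hx.2
    have hexp : Real.exp ((M+1) * |x - x₀|) ≤ Real.exp (M+1) := by
      apply Real.exp_le_exp.mpr
      nlinarith [abs_nonneg (x - x₀)]
    have hux : ‖ψ x‖ ≤ Real.exp (M+1) * ((1 + C1 M s) * P) := by
      calc ‖ψ x‖ ≤ ‖((ψ x : ℂ), (deriv ψ x : ℂ))‖ :=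
            norm_fst_le ((ψ x, deriv ψ x) : ℂ × ℂ)
        _ ≤ Real.exp ((M+1) * |x - x₀|) * ‖((ψ x₀ : ℂ), (deriv ψ x₀ : ℂ))‖ := hg
        _ ≤ Real.exp (M+1) * ((1 + C1 M s) * P) := by
            apply mul_le_mul hexp hux₀ (norm_nonneg _) (Real.exp_pos _).le
    have hexp2 : Real.exp (M+1) ^ 2 = Real.exp (2*(M+1)) := by
      rw [sq, ← Real.exp_add]
      congr 1
      ring
    calc ‖ψ x‖^2 ≤ (Real.exp (M+1) * ((1 + C1 M s) * P))^2 :=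
          pow_le_pow_left₀ (norm_nonneg _) hux 2
      _ = Real.exp (2*(M+1)) * (1 + C1 M s)^2 * P^2 := by
          rw [mul_pow, hexp2]
          ring
  -- upper bound for integral over unit interval
  set Q := Real.exp (2*(M+1)) * (1 + C1 M s)^2 * P^2 with hQdef
  have hQ0 : 0 ≤ Q := by positivity
  set I := Set.Icc ((k:ℝ)-1/2) ((k:ℝ)+1/2) ∩ Set.Icc (-(l:ℝ)/2) ((l:ℝ)/2) with hIdef
  have hImeas : MeasurableSet I := measurableSet_Icc.inter measurableSet_Icc
  have hIvol : (volume I).toReal ≤ 1 := by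
    have h1 : volume I ≤ volume (Set.Icc ((k:ℝ)-1/2) ((k:ℝ)+1/2)) :=
      measure_mono Set.inter_subset_left
    have h2 : volume (Set.Icc ((k:ℝ)-1/2) ((k:ℝ)+1/2)) = 1 := by
      rw [Real.volume_Icc]
      norm_num
    rw [h2] at h1
    calc (volume I).toReal ≤ (1 : ℝ≥0∞).toReal :=
          ENNReal.toReal_mono (by norm_num) h1
      _ = 1 := by norm_num
  have hintI : IntegrableOn (fun x => ‖ψ x‖^2) I :=
    ((hψ.continuous.norm.pow 2).integrableOn_Icc).mono_set Set.inter_subset_left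
  have hup : ∫ x in I, ‖ψ x‖^2 ≤ Q := by
    have hIfin : volume I ≠ ⊤ := by
      apply ne_top_of_le_ne_top _ (measure_mono (Set.inter_subset_left :
        I ⊆ Set.Icc ((k:ℝ)-1/2) ((k:ℝ)+1/2)))
      rw [Real.volume_Icc]; exact ENNReal.ofReal_ne_top
    have h5 : ∫ x in I, ‖ψ x‖^2 ≤ ∫ x in I, Q :=
      setIntegral_mono_on hintI (integrableOn_const hIfin)
        hImeas hptwise
    have h6 : ∫ _x in I, (Q:ℝ) = Q * (volume I).toReal := by
      rw [setIntegral_const, smul_eq_mul, mul_comm]; rfl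
    rw [h6] at h5
    nlinarith [mul_le_mul_of_nonneg_left hIvol hQ0]
  -- combine
  have h4 : dlt M s * P^2 ≤ 4 * ∫ x in Set.Icc ((k:ℝ)-s/2) ((k:ℝ)+s/2), ‖ψ x‖^2 := by
    nlinarith [hlow2]
  set R := ∫ x in Set.Icc ((k:ℝ)-s/2) ((k:ℝ)+s/2), ‖ψ x‖^2 with hRdef
  have hA : (0:ℝ) < Real.exp (2*(M+1)) * (1 + C1 M s)^2 := by positivity
  have hfinal : Q ≤ CC M s * R := by
    rw [hQdef]
    unfold CC
    rw [div_mul_eq_mul_div, le_div_iff₀ hdpos]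
    nlinarith [mul_le_mul_of_nonneg_left h4 hA.le]
  calc ∫ x in I, ‖ψ x‖^2 ≤ Q := hup
    _ ≤ CC M s * R := hfinal

set_option maxHeartbeats 1000000 in
/-- Global unique-continuation estimate: for every `M > 0` and `s ∈ (0,1]` there is `c > 0`
(depending only on `M` and `s`) such that for every `l ∈ ℕ`, every measurable `V`, every `E`
with `|V - E| ≤ M` a.e. on `Λ_l = [-l/2, l/2]`, and every `C²` eigenfunction `ψ` of
`-ψ'' + Vψ = Eψ` on `Λ_l`, the `L²` mass of `ψ` on `S = ⋃_{k ∈ ℤ ∩ Λ_l} [k - s/2, k + s/2]`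
dominates `c` times its mass on `Λ_l`. -/
theorem unique_continuation_global
    (M : ℝ) (hM : 0 < M) (s : ℝ) (hs : s ∈ Set.Ioc (0 : ℝ) 1) :
    ∃ c : ℝ, 0 < c ∧
      ∀ (l : ℕ) (V : ℝ → ℝ), Measurable V →
      ∀ (E : ℝ),
        (∀ᵐ x ∂(volume.restrict (Set.Icc (-(l : ℝ)/2) ((l : ℝ)/2))), |V x - E| ≤ M) →
      ∀ (ψ : ℝ → ℂ), ContDiff ℝ 2 ψ →
      (∀ x ∈ Set.Icc (-(l : ℝ)/2) ((l : ℝ)/2),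
        -(deriv (deriv ψ) x) + (V x : ℂ) * ψ x = (E : ℂ) * ψ x) →
      c * ∫ x in Set.Icc (-(l : ℝ)/2) ((l : ℝ)/2), ‖ψ x‖ ^ 2
        ≤ ∫ x in ⋃ k ∈ {k : ℤ | (k : ℝ) ∈ Set.Icc (-(l : ℝ)/2) ((l : ℝ)/2)},
            Set.Icc ((k : ℝ) - s/2) ((k : ℝ) + s/2), ‖ψ x‖ ^ 2 := by
  obtain ⟨hs0, hs1⟩ := hs
  refine ⟨(CC M s)⁻¹, inv_pos.mpr (CC_pos hM hs0), ?_⟩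
  intro l V hV E haeV ψ hψ heq
  have hfc : Continuous (fun x : ℝ => ‖ψ x‖^2) := hψ.continuous.norm.pow 2
  have hfnn : ∀ x : ℝ, 0 ≤ ‖ψ x‖^2 := fun x => by positivity
  have hSmeas : MeasurableSet (⋃ k ∈ {k : ℤ | (k : ℝ) ∈ Set.Icc (-(l : ℝ)/2) ((l : ℝ)/2)},
      Set.Icc ((k : ℝ) - s/2) ((k : ℝ) + s/2)) :=
    MeasurableSet.biUnion (Set.to_countable _) (fun k _ => measurableSet_Icc)
  by_cases hl : 1 ≤ l
  case neg =>
    have hl0 : (l:ℝ) = 0 := by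
      have : l = 0 := by omega
      simp [this]
    have hvol : volume (Set.Icc (-(l:ℝ)/2) ((l:ℝ)/2)) = 0 := by
      rw [hl0]
      simp [Real.volume_Icc]
    have hzero : ∫ x in Set.Icc (-(l:ℝ)/2) ((l:ℝ)/2), ‖ψ x‖^2 = 0 := by
      rw [Measure.restrict_eq_zero.mpr hvol, integral_zero_measure]
    rw [hzero, mul_zero]
    exact setIntegral_nonneg hSmeas (fun x _ => hfnn x)
  case pos =>
  have hl1 : (1:ℝ) ≤ (l:ℝ) := by exact_mod_cast hl
  -- pointwise ODE bound via continuity and a.e. bound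
  have hd2c : Continuous (deriv (deriv ψ)) := (hψ.iterate_deriv' 0 2).continuous
  have heq' : ∀ x ∈ Set.Icc (-(l:ℝ)/2) ((l:ℝ)/2),
      deriv (deriv ψ) x = ((V x : ℂ) - (E:ℂ)) * ψ x := by
    intro x hx
    have h := heq x hx
    linear_combination (-1 : ℂ) * h
  have hODE : ∀ x ∈ Set.Icc (-(l:ℝ)/2) ((l:ℝ)/2), ‖deriv (deriv ψ) x‖ ≤ M * ‖ψ x‖ := by
    have hae2 : ∀ᵐ x ∂volume, x ∈ Set.Icc (-(l:ℝ)/2) ((l:ℝ)/2) → |V x - E| ≤ M := by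
      rwa [ae_restrict_iff' measurableSet_Icc] at haeV
    have hNnull : volume {x : ℝ | ¬ (x ∈ Set.Icc (-(l:ℝ)/2) ((l:ℝ)/2) → |V x - E| ≤ M)} = 0 :=
      MeasureTheory.ae_iff.mp hae2
    have hBsub : Set.Icc (-(l:ℝ)/2) ((l:ℝ)/2) \
        {x : ℝ | ¬ (x ∈ Set.Icc (-(l:ℝ)/2) ((l:ℝ)/2) → |V x - E| ≤ M)} ⊆
        {x : ℝ | ‖deriv (deriv ψ) x‖ ≤ M * ‖ψ x‖} := by
      intro x hx
      have hxΛ : x ∈ Set.Icc (-(l:ℝ)/2) ((l:ℝ)/2) := hx.1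
      have hximp : x ∈ Set.Icc (-(l:ℝ)/2) ((l:ℝ)/2) → |V x - E| ≤ M := by
        have h7 := hx.2
        rw [Set.mem_setOf_eq, not_not] at h7
        exact h7
      have hVx : |V x - E| ≤ M := hximp hxΛ
      have hcast : ((V x : ℂ) - (E:ℂ)) = ((V x - E : ℝ) : ℂ) := by push_cast; ring
      simp only [Set.mem_setOf_eq]
      rw [heq' x hxΛ, norm_mul, hcast, Complex.norm_real, Real.norm_eq_abs]
      exact mul_le_mul_of_nonneg_right hVx (norm_nonneg _)
    have hclosed : IsClosed {x : ℝ | ‖deriv (deriv ψ) x‖ ≤ M * ‖ψ x‖} :=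
      isClosed_le hd2c.norm (continuous_const.mul hψ.continuous.norm)
    have hΛB : Set.Icc (-(l:ℝ)/2) ((l:ℝ)/2) ⊆ closure (Set.Icc (-(l:ℝ)/2) ((l:ℝ)/2) \
        {x : ℝ | ¬ (x ∈ Set.Icc (-(l:ℝ)/2) ((l:ℝ)/2) → |V x - E| ≤ M)}) := by
      intro x hx
      rw [Metric.mem_closure_iff]
      intro ε hε
      have hne : (Metric.ball x ε ∩ Set.Ioo (-(l:ℝ)/2) ((l:ℝ)/2)).Nonempty := by
        have hx' : x ∈ closure (Set.Ioo (-(l:ℝ)/2) ((l:ℝ)/2)) := by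
          rw [closure_Ioo (by linarith : -(l:ℝ)/2 ≠ (l:ℝ)/2)]
          exact hx
        rw [Metric.mem_closure_iff] at hx'
        obtain ⟨y, hy, hyd⟩ := hx' ε hε
        exact ⟨y, Metric.mem_ball.mpr (by rw [dist_comm]; exact hyd), hy⟩
      have hdiff : ((Metric.ball x ε ∩ Set.Ioo (-(l:ℝ)/2) ((l:ℝ)/2)) \
          {x : ℝ | ¬ (x ∈ Set.Icc (-(l:ℝ)/2) ((l:ℝ)/2) → |V x - E| ≤ M)}).Nonempty := by
        by_contra hcon
        rw [Set.not_nonempty_iff_eq_empty, Set.diff_eq_empty] at hcon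
        have hpos : 0 < volume (Metric.ball x ε ∩ Set.Ioo (-(l:ℝ)/2) ((l:ℝ)/2)) :=
          (Metric.isOpen_ball.inter isOpen_Ioo).measure_pos volume hne
        exact absurd (measure_mono_null hcon hNnull) hpos.ne'
      obtain ⟨y, ⟨hyb, hyo⟩, hyN⟩ := hdiff
      exact ⟨y, ⟨Set.Ioo_subset_Icc_self hyo, hyN⟩,
        by rw [dist_comm]; exact Metric.mem_ball.mp hyb⟩
    intro x hx
    exact (hclosed.closure_subset_iff.mpr hBsub) (hΛB hx)
  -- the relevant finite set of integers
  set F : Finset ℤ := Finset.Icc ⌈-(l:ℝ)/2⌉ ⌊(l:ℝ)/2⌋ with hF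
  have hFmem : ∀ k : ℤ, k ∈ F ↔ (k:ℝ) ∈ Set.Icc (-(l:ℝ)/2) ((l:ℝ)/2) := by
    intro k
    rw [hF, Finset.mem_Icc, Set.mem_Icc]
    constructor
    · rintro ⟨h1, h2⟩
      exact ⟨Int.ceil_le.mp h1, Int.le_floor.mp h2⟩
    · rintro ⟨h1, h2⟩
      exact ⟨Int.ceil_le.mpr h1, Int.le_floor.mpr h2⟩
  have hintΛ : IntegrableOn (fun x : ℝ => ‖ψ x‖^2) (Set.Icc (-(l:ℝ)/2) ((l:ℝ)/2)) :=
    hfc.integrableOn_Icc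
  -- decomposition of Λ_l into a.e. disjoint unit intervals
  have hg_disj : Set.Pairwise (↑F : Set ℤ)
      (Function.onFun Disjoint (fun k : ℤ => Set.Ioo ((k:ℝ)-1/2) ((k:ℝ)+1/2) ∩
        Set.Icc (-(l:ℝ)/2) ((l:ℝ)/2))) := by
    intro k _ k' _ hkk'
    simp only [Function.onFun]
    rw [Set.disjoint_left]
    intro x hx hx'
    have h1 := hx.1
    have h2 := hx'.1
    simp only [Set.mem_Ioo] at h1 h2
    have hi1 : ((-1:ℤ):ℝ) < ((k - k' : ℤ):ℝ) := by push_cast; linarith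
    have hi2 : ((k - k' : ℤ):ℝ) < ((1:ℤ):ℝ) := by push_cast; linarith
    have hint1 : (-1:ℤ) < k - k' := by exact_mod_cast hi1
    have hint2 : (k - k' : ℤ) < 1 := by exact_mod_cast hi2
    omega
  have hgmeas : ∀ k ∈ F, MeasurableSet (Set.Ioo ((k:ℝ)-1/2) ((k:ℝ)+1/2) ∩
      Set.Icc (-(l:ℝ)/2) ((l:ℝ)/2)) :=
    fun k _ => measurableSet_Ioo.inter measurableSet_Icc
  have hgint : ∀ k ∈ F, IntegrableOn (fun x : ℝ => ‖ψ x‖^2)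
      (Set.Ioo ((k:ℝ)-1/2) ((k:ℝ)+1/2) ∩ Set.Icc (-(l:ℝ)/2) ((l:ℝ)/2)) :=
    fun k _ => hintΛ.mono_set Set.inter_subset_right
  have hcover : Set.Icc (-(l:ℝ)/2) ((l:ℝ)/2) =ᵐ[volume]
      ⋃ k ∈ F, (Set.Ioo ((k:ℝ)-1/2) ((k:ℝ)+1/2) ∩ Set.Icc (-(l:ℝ)/2) ((l:ℝ)/2)) := by
    rw [MeasureTheory.ae_eq_set]
    constructor
    · apply measure_mono_null
        (?_ : _ ⊆ Set.range (fun m : ℤ => (m:ℝ) + 1/2))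
      · exact Set.Countable.measure_zero (Set.countable_range _) volume
      intro x hx
      obtain ⟨hxΛ, hxT⟩ := hx
      by_contra hxH
      apply hxT
      have habs : |x - (round x : ℝ)| ≤ 1/2 := abs_sub_round x
      have hne : |x - (round x : ℝ)| ≠ 1/2 := by
        intro habs2
        rcases (abs_eq (by norm_num : (0:ℝ) ≤ 1/2)).mp habs2 with h | h
        · exact hxH ⟨round x, by push_cast; linarith⟩
        · exact hxH ⟨round x - 1, by push_cast; linarith⟩
      have hlt : |x - (round x : ℝ)| < 1/2 := lt_of_le_of_ne habs hne
      rw [abs_sub_lt_iff] at hlt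
      have hxΛ' : -(l:ℝ)/2 ≤ x ∧ x ≤ (l:ℝ)/2 := hxΛ
      have hk2 : ((2 * round x : ℤ) : ℝ) < (l:ℝ) + 1 := by push_cast; linarith [hxΛ'.2, hlt.2]
      have hk3 : (-(l:ℝ)) - 1 < ((2 * round x : ℤ) : ℝ) := by push_cast; linarith [hxΛ'.1, hlt.1]
      have hk2' : (2 * round x : ℤ) ≤ (l:ℤ) := by
        have : (2 * round x : ℤ) < (l:ℤ) + 1 := by exact_mod_cast hk2
        omega
      have hk3' : -(l:ℤ) ≤ (2 * round x : ℤ) := by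
        have : -(l:ℤ) - 1 < (2 * round x : ℤ) := by exact_mod_cast hk3
        omega
      have hkF : round x ∈ F := by
        rw [hFmem]
        constructor
        · have : (-(l:ℤ) : ℝ) ≤ ((2 * round x : ℤ) : ℝ) := by exact_mod_cast hk3'
          push_cast at this
          linarith
        · have : ((2 * round x : ℤ) : ℝ) ≤ ((l:ℤ) : ℝ) := by exact_mod_cast hk2'
          push_cast at this
          linarith
      refine Set.mem_biUnion hkF ⟨?_, hxΛ⟩
      rw [Set.mem_Ioo]
      constructor <;> linarith [hlt.1, hlt.2]
    · have hsub : (⋃ k ∈ F, (Set.Ioo ((k:ℝ)-1/2) ((k:ℝ)+1/2) ∩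
          Set.Icc (-(l:ℝ)/2) ((l:ℝ)/2))) ⊆ Set.Icc (-(l:ℝ)/2) ((l:ℝ)/2) := by
        intro x hx
        simp only [Set.mem_iUnion] at hx
        obtain ⟨k, _, hk⟩ := hx
        exact hk.2
      rw [Set.diff_eq_empty.mpr hsub]
      simp
  have step1 : ∫ x in Set.Icc (-(l:ℝ)/2) ((l:ℝ)/2), ‖ψ x‖^2 =
      ∑ k ∈ F, ∫ x in Set.Ioo ((k:ℝ)-1/2) ((k:ℝ)+1/2) ∩ Set.Icc (-(l:ℝ)/2) ((l:ℝ)/2),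
        ‖ψ x‖^2 := by
    rw [setIntegral_congr_set hcover, integral_biUnion_finset F hgmeas hg_disj hgint]
  have step2 : ∀ k ∈ F,
      ∫ x in Set.Ioo ((k:ℝ)-1/2) ((k:ℝ)+1/2) ∩ Set.Icc (-(l:ℝ)/2) ((l:ℝ)/2), ‖ψ x‖^2
        ≤ CC M s * ∫ x in Set.Icc ((k:ℝ)-s/2) ((k:ℝ)+s/2), ‖ψ x‖^2 := by
    intro k hk
    have hkΛ := (hFmem k).mp hk
    calc ∫ x in Set.Ioo ((k:ℝ)-1/2) ((k:ℝ)+1/2) ∩ Set.Icc (-(l:ℝ)/2) ((l:ℝ)/2), ‖ψ x‖^2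
        ≤ ∫ x in Set.Icc ((k:ℝ)-1/2) ((k:ℝ)+1/2) ∩ Set.Icc (-(l:ℝ)/2) ((l:ℝ)/2), ‖ψ x‖^2 := by
          apply setIntegral_mono_set (hintΛ.mono_set Set.inter_subset_right)
          · filter_upwards with x using hfnn x
          · exact HasSubset.Subset.eventuallyLE
              (Set.inter_subset_inter_left _ Set.Ioo_subset_Icc_self)
      _ ≤ CC M s * ∫ x in Set.Icc ((k:ℝ)-s/2) ((k:ℝ)+s/2), ‖ψ x‖^2 :=
          local_est M s hM hs0 hs1 l hl ψ hψ hODE k hkΛ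
  have step3 : ∫ x in Set.Icc (-(l:ℝ)/2) ((l:ℝ)/2), ‖ψ x‖^2 ≤
      CC M s * ∑ k ∈ F, ∫ x in Set.Icc ((k:ℝ)-s/2) ((k:ℝ)+s/2), ‖ψ x‖^2 := by
    rw [step1, Finset.mul_sum]
    exact Finset.sum_le_sum step2
  -- RHS
  have hg'_disj : Set.Pairwise (↑F : Set ℤ)
      (Function.onFun Disjoint (fun k : ℤ => Set.Ioo ((k:ℝ)-s/2) ((k:ℝ)+s/2))) := by
    intro k _ k' _ hkk'
    simp only [Function.onFun]
    rw [Set.disjoint_left]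
    intro x hx hx'
    simp only [Set.mem_Ioo] at hx hx'
    have hi1 : ((-1:ℤ):ℝ) < ((k - k' : ℤ):ℝ) := by
      push_cast
      linarith [hx.1, hx.2, hx'.1, hx'.2]
    have hi2 : ((k - k' : ℤ):ℝ) < ((1:ℤ):ℝ) := by
      push_cast
      linarith [hx.1, hx.2, hx'.1, hx'.2]
    have hint1 : (-1:ℤ) < k - k' := by exact_mod_cast hi1
    have hint2 : (k - k' : ℤ) < 1 := by exact_mod_cast hi2
    omega
  have hSbig : (⋃ k ∈ {k : ℤ | (k : ℝ) ∈ Set.Icc (-(l : ℝ)/2) ((l : ℝ)/2)},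
      Set.Icc ((k : ℝ) - s/2) ((k : ℝ) + s/2)) ⊆ Set.Icc (-(l:ℝ)/2 - 1) ((l:ℝ)/2 + 1) := by
    intro x hx
    simp only [Set.mem_iUnion, Set.mem_setOf_eq] at hx
    obtain ⟨k, hk, hxk⟩ := hx
    have h1 := hk.1
    have h2 := hk.2
    have h3 := hxk.1
    have h4 := hxk.2
    constructor <;> nlinarith
  have hSint : IntegrableOn (fun x : ℝ => ‖ψ x‖^2)
      (⋃ k ∈ {k : ℤ | (k : ℝ) ∈ Set.Icc (-(l : ℝ)/2) ((l : ℝ)/2)},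
        Set.Icc ((k : ℝ) - s/2) ((k : ℝ) + s/2)) :=
    (hfc.integrableOn_Icc).mono_set hSbig
  have step4 : ∑ k ∈ F, ∫ x in Set.Icc ((k:ℝ)-s/2) ((k:ℝ)+s/2), ‖ψ x‖^2 ≤
      ∫ x in ⋃ k ∈ {k : ℤ | (k : ℝ) ∈ Set.Icc (-(l : ℝ)/2) ((l : ℝ)/2)},
        Set.Icc ((k : ℝ) - s/2) ((k : ℝ) + s/2), ‖ψ x‖^2 := by
    have e1 : ∀ k ∈ F, ∫ x in Set.Icc ((k:ℝ)-s/2) ((k:ℝ)+s/2), ‖ψ x‖^2 =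
        ∫ x in Set.Ioo ((k:ℝ)-s/2) ((k:ℝ)+s/2), ‖ψ x‖^2 :=
      fun k _ => integral_Icc_eq_integral_Ioo
    rw [Finset.sum_congr rfl e1,
      ← integral_biUnion_finset F (fun k _ => measurableSet_Ioo) hg'_disj
        (fun k hk => (hfc.integrableOn_Icc).mono_set Set.Ioo_subset_Icc_self)]
    apply setIntegral_mono_set hSint
    · filter_upwards with x using hfnn x
    · apply HasSubset.Subset.eventuallyLE
      intro x hx
      simp only [Set.mem_iUnion] at hx ⊢
      obtain ⟨k, hk, hxk⟩ := hx
      exact ⟨k, (hFmem k).mp hk, Set.Ioo_subset_Icc_self hxk⟩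
  have hCC := CC_pos hM hs0
  have hfinal : ∫ x in Set.Icc (-(l:ℝ)/2) ((l:ℝ)/2), ‖ψ x‖^2 ≤
      CC M s * ∫ x in ⋃ k ∈ {k : ℤ | (k : ℝ) ∈ Set.Icc (-(l : ℝ)/2) ((l : ℝ)/2)},
        Set.Icc ((k : ℝ) - s/2) ((k : ℝ) + s/2), ‖ψ x‖^2 :=
    le_trans step3 (mul_le_mul_of_nonneg_left step4 hCC.le)
  rw [inv_mul_le_iff₀ hCC]
  exact hfinal
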